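/- Let p be a prime, d, K, N positive integers. For k = 1,…,K let α_k be a non-zero rational number with ν_p(α_k) = −e_k where e_1,…,e_K are positive integers satisfying e_k > d·e_{k−1} for all k (with e_0 = 0). Let P ∈ ℤ[x_1,…,x_K] be a non-zero polynomial of degree at most d whose leading coefficient (in colexicographic order of exponent tuples) is not divisible by p. Then P(α_1,…,α_K) ≠ 0. -/

import Mathlib

/-- Colexicographic strict order on exponent tuples: `i < j` iff at the largest
index where they differ, `i` is smaller. -/
def ColexLt {K : ℕ} (i j : Fin K →₀ ℕ) : Prop :=
  ∃ m : Fin K, i m < j m ∧ ∀ l, m < l → i l = j l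

private lemma padicNorm_prod {p : ℕ} [Fact p.Prime] {β : Type*} (s : Finset β) (f : β → ℚ) :
    padicNorm p (∏ x ∈ s, f x) = ∏ x ∈ s, padicNorm p (f x) := by
  classical
  induction s using Finset.induction with
  | empty => simp [padicNorm.one]
  | insert _ _ h ih => rw [Finset.prod_insert h, padicNorm.mul, ih, Finset.prod_insert h]

private lemma padicNorm_pow {p : ℕ} [Fact p.Prime] (q : ℚ) (n : ℕ) :
    padicNorm p (q ^ n) = padicNorm p q ^ n := by
  induction n with
  | zero => simp [padicNorm.one]
  | succ n ih => rw [pow_succ, pow_succ, padicNorm.mul, ih]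

private lemma univ_split {K : ℕ} (m : Fin K) (f : Fin K → ℕ) :
    ∑ k, f k = (∑ k ∈ Finset.Iio m, f k) + (f m + ∑ k ∈ Finset.Ioi m, f k) := by
  classical
  have h1 : (Finset.univ : Finset (Fin K)) = Finset.Iio m ∪ insert m (Finset.Ioi m) := by
    ext k
    simp only [Finset.mem_univ, Finset.mem_union, Finset.mem_Iio, Finset.mem_insert,
      Finset.mem_Ioi, true_iff]
    rcases lt_trichotomy k m with h | h | h
    · exact Or.inl h
    · exact Or.inr (Or.inl h)
    · exact Or.inr (Or.inr h)
  have hd : Disjoint (Finset.Iio m) (insert m (Finset.Ioi m)) := by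
    simp only [Finset.disjoint_left, Finset.mem_Iio, Finset.mem_insert, Finset.mem_Ioi]
    rintro a ha (rfl | ha')
    · exact lt_irrefl _ ha
    · exact absurd (ha.trans ha') (lt_irrefl a)
  rw [h1, Finset.sum_union hd, Finset.sum_insert (by simp)]

theorem stmt11 (p : ℕ) (hp : p.Prime) (d K : ℕ) (hd : 0 < d) (hK : 0 < K)
    (e : ℕ → ℕ) (he0 : e 0 = 0)
    (hepos : ∀ k, 1 ≤ k → k ≤ K → 0 < e k)
    (hesep : ∀ k, 1 ≤ k → k ≤ K → d * e (k - 1) < e k)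
    (α : Fin K → ℚ) (hα : ∀ k, α k ≠ 0)
    (hval : ∀ k : Fin K, padicValRat p (α k) = -(e (k.val + 1) : ℤ))
    (P : MvPolynomial (Fin K) ℤ) (hP : P ≠ 0) (hdeg : P.totalDegree ≤ d)
    (hlead : ∀ j₀ ∈ P.support,
      (∀ i ∈ P.support, i ≠ j₀ → ColexLt i j₀) → ¬ ((p : ℤ) ∣ P.coeff j₀)) :
    MvPolynomial.aeval α P ≠ 0 := by
  classical
  haveI : Fact p.Prime := ⟨hp⟩
  have hp1 : 1 < p := hp.one_lt
  have hp1Q : (1 : ℚ) < (p : ℚ) := by exact_mod_cast hp1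
  -- the weight of a monomial
  set w : (Fin K →₀ ℕ) → ℕ := fun j => ∑ k : Fin K, j k * e (k.val + 1) with hw
  -- e is monotone on [0, K]
  have emono : ∀ a b : ℕ, a ≤ b → b ≤ K → e a ≤ e b := by
    intro a b hab hbK
    induction b with
    | zero =>
      have : a = 0 := by omega
      subst this; rfl
    | succ n ih =>
      rcases Nat.lt_or_ge a (n + 1) with h | h
      · have h1 : e a ≤ e n := ih (by omega) (by omega)
        have h2 : d * e n < e (n + 1) := by
          have := hesep (n + 1) (by omega) hbK
          simpa using this
        have : e n ≤ d * e n := Nat.le_mul_of_pos_left _ hd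
        omega
      · have : a = n + 1 := by omega
        subst this; rfl
  -- degree of a monomial in the support is at most d
  have hdegmon : ∀ i ∈ P.support, ∑ k : Fin K, i k ≤ d := by
    intro i hi
    have h1 := MvPolynomial.le_totalDegree hi
    have h2 : (i.sum fun _ n => n) = ∑ k : Fin K, i k :=
      Finsupp.sum_fintype _ _ (fun _ => rfl)
    omega
  -- key: colex comparison at index m, with the smaller one of degree ≤ d, implies weight <
  have key : ∀ i j : Fin K →₀ ℕ, (∑ k : Fin K, i k ≤ d) → ∀ m : Fin K,
      i m < j m → (∀ l, m < l → i l = j l) → w i < w j := by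
    intro i j hisum m him hagree
    have hsplit_i := univ_split m (fun k => i k * e (k.val + 1))
    have hsplit_j := univ_split m (fun k => j k * e (k.val + 1))
    have hB : ∑ k ∈ Finset.Ioi m, i k * e (k.val + 1)
        = ∑ k ∈ Finset.Ioi m, j k * e (k.val + 1) := by
      refine Finset.sum_congr rfl fun k hk => ?_
      rw [hagree k (Finset.mem_Ioi.mp hk)]
    have hmK : m.val + 1 ≤ K := m.isLt
    have hAi : ∑ k ∈ Finset.Iio m, i k * e (k.val + 1)
        ≤ (∑ k ∈ Finset.Iio m, i k) * e m.val := by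
      rw [Finset.sum_mul]
      refine Finset.sum_le_sum fun k hk => ?_
      have hkm : k < m := Finset.mem_Iio.mp hk
      exact Nat.mul_le_mul_left _ (emono (k.val + 1) m.val hkm (by omega))
    have hsum_lt : ∑ k ∈ Finset.Iio m, i k ≤ d := by
      have : ∑ k ∈ Finset.Iio m, i k ≤ ∑ k : Fin K, i k :=
        Finset.sum_le_sum_of_subset (Finset.subset_univ _)
      omega
    have hA_lt : (∑ k ∈ Finset.Iio m, i k) * e m.val < e (m.val + 1) := by
      have h1 : (∑ k ∈ Finset.Iio m, i k) * e m.val ≤ d * e m.val :=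
        Nat.mul_le_mul_right _ hsum_lt
      have h2 := hesep (m.val + 1) (by omega) hmK
      simpa using lt_of_le_of_lt h1 h2
    have him' : i m * e (m.val + 1) + e (m.val + 1) ≤ j m * e (m.val + 1) := by
      have : (i m + 1) * e (m.val + 1) ≤ j m * e (m.val + 1) :=
        Nat.mul_le_mul_right _ him
      nlinarith [this]
    have hAj : 0 ≤ ∑ k ∈ Finset.Iio m, j k * e (k.val + 1) := Nat.zero_le _
    simp only [hw]
    omega
  -- pick the maximal-weight element of the support
  have hne : P.support.Nonempty := by
    exact MvPolynomial.support_nonempty.mpr hP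
  obtain ⟨j₀, hj₀, hmax⟩ := Finset.exists_max_image P.support w hne
  -- every other element of the support is colex-smaller, with strictly smaller weight
  have hcolex : ∀ i ∈ P.support, i ≠ j₀ → ColexLt i j₀ ∧ w i < w j₀ := by
    intro i hi hne'
    have hD : (Finset.univ.filter fun k => i k ≠ j₀ k).Nonempty := by
      by_contra h
      rw [Finset.not_nonempty_iff_eq_empty, Finset.filter_eq_empty_iff] at h
      exact hne' (Finsupp.ext fun k => by
        have := h (Finset.mem_univ k); simpa using this)
    set D := Finset.univ.filter fun k => i k ≠ j₀ k with hDdef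
    set m := D.max' hD with hm
    have hmD : m ∈ D := D.max'_mem hD
    have hmne : i m ≠ j₀ m := by
      have := hmD; rw [hDdef, Finset.mem_filter] at this; exact this.2
    have hagree : ∀ l, m < l → i l = j₀ l := by
      intro l hl
      by_contra h
      have hlD : l ∈ D := by rw [hDdef, Finset.mem_filter]; exact ⟨Finset.mem_univ _, h⟩
      exact absurd (D.le_max' l hlD) (not_le.mpr hl)
    rcases lt_or_gt_of_ne hmne with h | h
    · exact ⟨⟨m, h, hagree⟩, key i j₀ (hdegmon i hi) m h hagree⟩
    · exfalso
      have := key j₀ i (hdegmon j₀ hj₀) m h (fun l hl => (hagree l hl).symm)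
      exact absurd (hmax i hi) (not_le.mpr this)
  -- leading coefficient is not divisible by p
  have hpcoeff : ¬ ((p : ℤ) ∣ P.coeff j₀) :=
    hlead j₀ hj₀ (fun i hi hne' => (hcolex i hi hne').1)
  -- the terms
  set T : (Fin K →₀ ℕ) → ℚ := fun i => ((P.coeff i : ℤ) : ℚ) * ∏ k : Fin K, α k ^ i k with hT
  have hsum : (MvPolynomial.aeval α P : ℚ) = ∑ i ∈ P.support, T i := by
    rw [MvPolynomial.aeval_def, MvPolynomial.eval₂_eq']
    rfl
  -- norm of a power product
  have hnormα : ∀ k : Fin K, padicNorm p (α k) = (p : ℚ) ^ (e (k.val + 1)) := by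
    intro k
    rw [padicNorm.eq_zpow_of_nonzero (hα k), hval k, neg_neg, zpow_natCast]
  have hnormprod : ∀ i : Fin K →₀ ℕ,
      padicNorm p (∏ k : Fin K, α k ^ i k) = (p : ℚ) ^ (w i) := by
    intro i
    rw [padicNorm_prod, hw]
    rw [← Finset.prod_pow_eq_pow_sum]
    refine Finset.prod_congr rfl fun k _ => ?_
    rw [padicNorm_pow, hnormα, ← pow_mul, mul_comm]
  have hppos : (0 : ℚ) < (p : ℚ) ^ (w j₀) := pow_pos (by positivity) _
  -- norm of the leading term
  have hTj₀ : padicNorm p (T j₀) = (p : ℚ) ^ (w j₀) := by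
    rw [hT]
    simp only
    rw [padicNorm.mul, hnormprod, (padicNorm.int_eq_one_iff _).mpr hpcoeff, one_mul]
  -- norms of the other terms
  have hTi : ∀ i ∈ P.support, i ≠ j₀ → padicNorm p (T i) < (p : ℚ) ^ (w j₀) := by
    intro i hi hne'
    have hwi : w i < w j₀ := (hcolex i hi hne').2
    have h1 : padicNorm p (T i) ≤ (p : ℚ) ^ (w i) := by
      rw [hT]
      simp only
      rw [padicNorm.mul, hnormprod]
      calc padicNorm p ((P.coeff i : ℤ) : ℚ) * (p : ℚ) ^ (w i)
          ≤ 1 * (p : ℚ) ^ (w i) := by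
            refine mul_le_mul_of_nonneg_right (padicNorm.of_int _) (by positivity)
        _ = (p : ℚ) ^ (w i) := one_mul _
    have h2 : (p : ℚ) ^ (w i) < (p : ℚ) ^ (w j₀) :=
      pow_lt_pow_right₀ hp1Q hwi
    exact lt_of_le_of_lt h1 h2
  -- combine
  have hrest : padicNorm p (∑ i ∈ P.support.erase j₀, T i) < (p : ℚ) ^ (w j₀) := by
    refine padicNorm.sum_lt' (fun i hi => ?_) hppos
    exact hTi i (Finset.mem_of_mem_erase hi) (Finset.ne_of_mem_erase hi)
  have hdecomp : (∑ i ∈ P.support, T i) = T j₀ + ∑ i ∈ P.support.erase j₀, T i :=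
    (Finset.add_sum_erase _ _ hj₀).symm
  have hnorm_total : padicNorm p (∑ i ∈ P.support, T i) = (p : ℚ) ^ (w j₀) := by
    rw [hdecomp]
    have hneq : padicNorm p (T j₀) ≠ padicNorm p (∑ i ∈ P.support.erase j₀, T i) := by
      rw [hTj₀]; exact fun h => absurd h.symm (ne_of_lt hrest)
    rw [padicNorm.add_eq_max_of_ne hneq, hTj₀]
    exact max_eq_left (le_of_lt (hTj₀ ▸ hrest))
  intro hzero
  rw [hsum] at hzero
  rw [hzero, padicNorm.zero] at hnorm_total
  exact absurd hnorm_total.symm (ne_of_gt hppos)
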